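/- arXiv:1808.08293 — 3 statements merged into one kernel-verified Lean document; each statement's English description precedes it below -/
import Mathlib

section
/- Let ε, η > 0 and let (x, y) : [−1, ∞) → ℝ² be a C¹ solution on [0,∞) of the delay system ε·x′(t) = −x(t) − y(t) + f(x(t−1)), y′(t) = η·x(t), with f bounded on the range of x. If there exists t₀ ≥ 0 and c₀ > 0 such that x(t) ≥ c₀ for all t ≥ t₀, then a contradiction follows; hence x cannot stay uniformly bounded away from zero from above (analogously from below). Consequently, if x does not converge to 0 and x is bounded with f bounded on its range, then x has a zero in (0, ∞). -/
open MeasureTheory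

theorem stmt_2 (ε η M c₀ t₀ : ℝ) (f x y : ℝ → ℝ)
    (hε : 0 < ε) (hη : 0 < η) (hM : 0 < M)
    (hxc : Continuous x)
    (hx : ∀ t ≥ (0:ℝ), HasDerivAt x ((-x t - y t + f (x (t - 1))) / ε) t)
    (hy : ∀ t ≥ (0:ℝ), HasDerivAt y (η * x t) t)
    (hyint : ∀ t ≥ (0:ℝ), y t = y 0 + η * ∫ s in (0:ℝ)..t, x s)
    (hfb : ∀ t ≥ (-1:ℝ), |f (x t)| ≤ M)
    (ht₀ : 0 ≤ t₀) (hc₀ : 0 < c₀)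
    (hlow : ∀ t ≥ t₀, c₀ ≤ x t) :
    False := by
  -- Step 1: y grows at least linearly after t₀.
  have hint : ∀ a b : ℝ, IntervalIntegrable x volume a b :=
    fun a b => hxc.intervalIntegrable a b
  have hygrow : ∀ t ≥ t₀, y t₀ + η * c₀ * (t - t₀) ≤ y t := by
    intro t ht
    have h1 := hyint t (ht₀.trans ht)
    have h2 := hyint t₀ ht₀
    have hsplit : (∫ s in (0:ℝ)..t₀, x s) + (∫ s in t₀..t, x s) = ∫ s in (0:ℝ)..t, x s :=
      intervalIntegral.integral_add_adjacent_intervals (hint 0 t₀) (hint t₀ t)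
    have hmono : c₀ * (t - t₀) ≤ ∫ s in t₀..t, x s := by
      have := intervalIntegral.integral_mono_on (μ := volume) ht
        (intervalIntegrable_const (c := c₀)) (hint t₀ t)
        (fun s hs => hlow s hs.1)
      simpa [mul_comm] using this
    have : y t - y t₀ = η * ∫ s in t₀..t, x s := by
      rw [h1, h2]; rw [← hsplit]; ring
    nlinarith [mul_le_mul_of_nonneg_left hmono hη.le]
  -- Step 2: choose t₁ with y t ≥ M - c₀ + ε for all t ≥ t₁
  set K : ℝ := M - c₀ + ε
  obtain ⟨t₁, ht₁0, hyK⟩ : ∃ t₁ ≥ t₀, ∀ t ≥ t₁, K ≤ y t := by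
    refine ⟨t₀ + max 0 ((K - y t₀) / (η * c₀)), le_add_of_nonneg_right (le_max_left _ _), ?_⟩
    intro t ht
    have ht' : t₀ ≤ t := le_trans (le_add_of_nonneg_right (le_max_left _ _)) ht
    have hg := hygrow t ht'
    have hmax : (K - y t₀) / (η * c₀) ≤ t - t₀ := by
      have := le_max_right 0 ((K - y t₀) / (η * c₀))
      linarith [ht]
    have hpos : 0 < η * c₀ := mul_pos hη hc₀
    have : K - y t₀ ≤ η * c₀ * (t - t₀) := by
      rw [div_le_iff₀ hpos] at hmax; linarith [hmax]
    linarith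
  -- Step 3: x' ≤ -1 for t ≥ t₁, so g = x + id is antitone on [t₁, ∞).
  have ht₁nn : (0:ℝ) ≤ t₁ := ht₀.trans ht₁0
  set g : ℝ → ℝ := fun t => x t + t with hg
  have hgderiv : ∀ t ∈ Set.Ici t₁, HasDerivAt g ((-x t - y t + f (x (t - 1))) / ε + 1) t := by
    intro t ht
    exact (hx t (ht₁nn.trans ht)).add (hasDerivAt_id t)
  have hganti : AntitoneOn g (Set.Ici t₁) := by
    apply antitoneOn_of_deriv_nonpos (convex_Ici t₁)
    · exact fun t ht => ((hgderiv t ht).continuousAt).continuousWithinAt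
    · intro t ht
      rw [interior_Ici] at ht
      exact ((hgderiv t (Set.mem_Ici.mpr (le_of_lt (Set.mem_Ioi.mp ht)))).differentiableAt).differentiableWithinAt
    · intro t ht
      rw [interior_Ici] at ht
      have ht' : t₁ ≤ t := le_of_lt ht
      rw [(hgderiv t ht').deriv]
      have hxt : c₀ ≤ x t := hlow t (ht₁0.trans ht')
      have hyt : K ≤ y t := hyK t ht'
      have hft : |f (x (t - 1))| ≤ M := hfb (t - 1) (by linarith [ht₁nn.trans ht'])
      have hfle : f (x (t - 1)) ≤ M := (abs_le.mp hft).2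
      have hnum : -x t - y t + f (x (t - 1)) ≤ -ε := by
        simp only [K] at hyt; linarith
      have hd : (-x t - y t + f (x (t-1)))/ε ≤ -ε/ε :=
        (div_le_div_iff_of_pos_right hε).mpr hnum
      rw [neg_div, div_self hε.ne'] at hd
      linarith
  -- Step 4: derive contradiction
  set t₂ : ℝ := t₁ + (x t₁ - c₀ + 1)
  have hxt₁ : c₀ ≤ x t₁ := hlow t₁ ht₁0
  have ht₂ : t₁ ≤ t₂ := by simp only [t₂]; linarith
  have := hganti (Set.self_mem_Ici) (Set.mem_Ici.mpr ht₂) ht₂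
  have hxt₂ : c₀ ≤ x t₂ := hlow t₂ (ht₁0.trans ht₂)
  simp only [g, t₂] at this
  linarith
end

section
/- With L as defined before (Lemma on L), the map Lφ satisfies the ordinary differential equation d/dθ (Lφ)(θ) = A⁰(Lφ)(θ) + φ′(θ) − Aᵠφ(θ), where Aᵠ = [[−1/ε, −1/ε],[η, 0]] and A⁰ = [[−1/ε, −1/ε],[0, 0]], with initial condition (Lφ)(−T) = φ(−T). Consequently L is injective on C¹([−T, 0], ℝ²). -/
open MeasureTheory

lemma prim_hasDerivAt' {f : ℝ → ℝ} (hf : Continuous f) (a θ : ℝ) :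
    HasDerivAt (fun u => ∫ s in a..u, f s) (f θ) θ :=
  intervalIntegral.integral_hasDerivAt_right (hf.intervalIntegrable a θ)
    (hf.stronglyMeasurableAtFilter _ _) hf.continuousAt

lemma ext_cont' {a b : ℝ} (hab : a ≤ b) {h : ℝ → ℝ} (hh : ContinuousOn h (Set.Icc a b)) :
    Continuous (fun θ => h (max a (min θ b))) := by
  apply hh.comp_continuous (continuous_const.max (continuous_id.min continuous_const))
  intro x
  exact ⟨le_max_left _ _, max_le hab (min_le_right _ _)⟩

lemma prim_congr' {T : ℝ} {h c : ℝ → ℝ}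
    (hc : ∀ σ ∈ Set.Icc (-T) (0:ℝ), c σ = h σ)
    {θ : ℝ} (hθ : θ ∈ Set.Icc (-T) (0:ℝ)) :
    (∫ σ in (-T)..θ, h σ) = ∫ σ in (-T)..θ, c σ := by
  apply intervalIntegral.integral_congr
  intro σ hσ
  rw [Set.uIcc_of_le hθ.1] at hσ
  exact (hc σ ⟨hσ.1, le_trans hσ.2 hθ.2⟩).symm

lemma key_repr' {T ε : ℝ} {h c F G : ℝ → ℝ}
    (hc : ∀ σ ∈ Set.Icc (-T) (0:ℝ), c σ = h σ)
    (hF : ∀ s, F s = ∫ σ in (-T)..s, c σ)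
    (hG : ∀ s, G s = ∫ s' in (-T)..s, Real.exp (s'/ε) * F s')
    {θ : ℝ} (hθ : θ ∈ Set.Icc (-T) (0:ℝ)) :
    (∫ s in (-T)..θ, Real.exp (-(θ - s) / ε) * ∫ σ in (-T)..s, h σ)
      = Real.exp (-θ/ε) * G θ := by
  rw [hG, ← intervalIntegral.integral_const_mul]
  apply intervalIntegral.integral_congr
  intro s hs
  rw [Set.uIcc_of_le hθ.1] at hs
  have hs' : s ∈ Set.Icc (-T) (0:ℝ) := ⟨hs.1, le_trans hs.2 hθ.2⟩
  show Real.exp (-(θ - s)/ε) * (∫ σ in (-T)..s, h σ) = Real.exp (-θ/ε) * (Real.exp (s/ε) * F s)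
  have h1 : (∫ σ in (-T)..s, h σ) = F s := by
    rw [hF]; exact prim_congr' hc hs'
  rw [h1, show -(θ - s)/ε = -θ/ε + s/ε by ring, Real.exp_add, mul_assoc]

theorem stmt_5 (ε η T : ℝ) (hε : 0 < ε) (hη : 0 < η) (hT : 1 ≤ T) (hT2 : T < 2)
    (φ1 φ2 : ℝ → ℝ) (d1 d2 : ℝ → ℝ)
    (hφ1 : ∀ θ ∈ Set.Icc (-T) (0:ℝ), HasDerivWithinAt φ1 (d1 θ) (Set.Icc (-T) 0) θ)
    (hφ2 : ∀ θ ∈ Set.Icc (-T) (0:ℝ), HasDerivWithinAt φ2 (d2 θ) (Set.Icc (-T) 0) θ)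
    (hd1 : ContinuousOn d1 (Set.Icc (-T) 0))
    (hd2 : ContinuousOn d2 (Set.Icc (-T) 0))
    (L1 L2 : ℝ → ℝ)
    (hL1 : ∀ θ, L1 θ = φ1 θ +
      η * ((1 / ε) * ∫ s in (-T)..θ, Real.exp (-(θ - s) / ε) * ∫ σ in (-T)..s, φ1 σ))
    (hL2 : ∀ θ, L2 θ = φ2 θ - η * ∫ s in (-T)..θ, φ1 s) :
    -- the ODE satisfied by Lφ, with initial condition (Lφ)(-T) = φ(-T)
    (L1 (-T) = φ1 (-T) ∧ L2 (-T) = φ2 (-T)) ∧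
    (∀ θ ∈ Set.Icc (-T) (0:ℝ),
      HasDerivWithinAt L1
        (-(1 / ε) * (L1 θ + L2 θ) + d1 θ + (1 / ε) * (φ1 θ + φ2 θ)) (Set.Icc (-T) 0) θ ∧
      HasDerivWithinAt L2 (d2 θ - η * φ1 θ) (Set.Icc (-T) 0) θ) ∧
    -- injectivity of L on C¹([-T,0], ℝ²)
    (∀ ψ1 ψ2 : ℝ → ℝ,
      ContDiffOn ℝ 1 ψ1 (Set.Icc (-T) 0) → ContDiffOn ℝ 1 ψ2 (Set.Icc (-T) 0) →
      (∀ θ ∈ Set.Icc (-T) (0:ℝ),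
        ψ1 θ + η * ((1 / ε) * ∫ s in (-T)..θ, Real.exp (-(θ - s) / ε) *
            ∫ σ in (-T)..s, ψ1 σ) = L1 θ ∧
        ψ2 θ - η * (∫ s in (-T)..θ, ψ1 s) = L2 θ) →
      ∀ θ ∈ Set.Icc (-T) (0:ℝ), ψ1 θ = φ1 θ ∧ ψ2 θ = φ2 θ) := by
  have hT0 : -T ≤ (0:ℝ) := by linarith
  have hφ1c : ContinuousOn φ1 (Set.Icc (-T) 0) := fun θ hθ => (hφ1 θ hθ).continuousWithinAt
  set c1 : ℝ → ℝ := fun θ => φ1 (max (-T) (min θ 0)) with hc1def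
  have hc1cont : Continuous c1 := ext_cont' hT0 hφ1c
  have hc1eq : ∀ θ ∈ Set.Icc (-T) (0:ℝ), c1 θ = φ1 θ := by
    intro θ hθ
    show φ1 (max (-T) (min θ 0)) = φ1 θ
    rw [min_eq_left hθ.2, max_eq_right hθ.1]
  set F : ℝ → ℝ := fun θ => ∫ s in (-T)..θ, c1 s with hFdef
  have hF : ∀ θ, HasDerivAt F (c1 θ) θ := fun θ => prim_hasDerivAt' hc1cont _ θ
  have hFc : Continuous F := continuous_iff_continuousAt.2 fun θ => (hF θ).continuousAt
  set G : ℝ → ℝ := fun θ => ∫ s in (-T)..θ, Real.exp (s/ε) * F s with hGdef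
  have hGintc : Continuous (fun s => Real.exp (s/ε) * F s) :=
    (Real.continuous_exp.comp (continuous_id.div_const ε)).mul hFc
  have hG : ∀ θ, HasDerivAt G (Real.exp (θ/ε) * F θ) θ := fun θ => prim_hasDerivAt' hGintc _ θ
  have hg1eq : ∀ t ∈ Set.Icc (-T) (0:ℝ),
      L1 t = φ1 t + η * ((1/ε) * (Real.exp (-t/ε) * G t)) := by
    intro t ht
    rw [hL1 t, key_repr' hc1eq (fun s => rfl) (fun s => rfl) ht]
  have hg2eq : ∀ t ∈ Set.Icc (-T) (0:ℝ), L2 t = φ2 t - η * F t := by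
    intro t ht
    rw [hL2 t, prim_congr' hc1eq ht]
  have hEexp : ∀ t : ℝ, HasDerivAt (fun u => Real.exp (-u/ε)) (Real.exp (-t/ε) * (-1/ε)) t := by
    intro t
    have h1 : HasDerivAt (fun u : ℝ => -u/ε) (-1/ε) t := by
      simpa using (hasDerivAt_id t).neg.div_const ε
    exact h1.exp
  refine ⟨⟨?_, ?_⟩, ?_, ?_⟩
  · simp [hL1, intervalIntegral.integral_same]
  · simp [hL2, intervalIntegral.integral_same]
  · intro θ hθ
    constructor
    · have hprod : HasDerivAt (fun u => Real.exp (-u/ε) * G u)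
          (Real.exp (-θ/ε) * (-1/ε) * G θ + Real.exp (-θ/ε) * (Real.exp (θ/ε) * F θ)) θ :=
        (hEexp θ).mul (hG θ)
      have hg1' : HasDerivWithinAt (fun u => φ1 u + η * ((1/ε) * (Real.exp (-u/ε) * G u)))
          (d1 θ + η * ((1/ε) * (Real.exp (-θ/ε) * (-1/ε) * G θ +
            Real.exp (-θ/ε) * (Real.exp (θ/ε) * F θ)))) (Set.Icc (-T) 0) θ :=
        (hφ1 θ hθ).add (((hprod.const_mul (1/ε)).const_mul η).hasDerivWithinAt)
      have hEE : Real.exp (-θ/ε) * Real.exp (θ/ε) = 1 := by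
        rw [← Real.exp_add, show -θ/ε + θ/ε = 0 by ring, Real.exp_zero]
      have key : -(1/ε) * (L1 θ + L2 θ) + d1 θ + (1/ε) * (φ1 θ + φ2 θ)
          = d1 θ + η * ((1/ε) * (Real.exp (-θ/ε) * (-1/ε) * G θ +
            Real.exp (-θ/ε) * (Real.exp (θ/ε) * F θ))) := by
        rw [hg1eq θ hθ, hg2eq θ hθ]
        linear_combination (-(η/ε) * F θ) * hEE
      rw [key]
      exact hg1'.congr hg1eq (hg1eq θ hθ)
    · have hg2' : HasDerivWithinAt (fun u => φ2 u - η * F u)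
          (d2 θ - η * c1 θ) (Set.Icc (-T) 0) θ :=
        (hφ2 θ hθ).sub (((hF θ).const_mul η).hasDerivWithinAt)
      rw [← hc1eq θ hθ]
      exact hg2'.congr hg2eq (hg2eq θ hθ)
  · intro ψ1 ψ2 hψ1 hψ2 heq
    have hψ1c : ContinuousOn ψ1 (Set.Icc (-T) 0) := hψ1.continuousOn
    set cp : ℝ → ℝ := fun θ => ψ1 (max (-T) (min θ 0)) with hcpdef
    have hcpcont : Continuous cp := ext_cont' hT0 hψ1c
    have hcpeq : ∀ θ ∈ Set.Icc (-T) (0:ℝ), cp θ = ψ1 θ := by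
      intro θ hθ
      show ψ1 (max (-T) (min θ 0)) = ψ1 θ
      rw [min_eq_left hθ.2, max_eq_right hθ.1]
    set Fp : ℝ → ℝ := fun θ => ∫ s in (-T)..θ, cp s with hFpdef
    have hFp : ∀ θ, HasDerivAt Fp (cp θ) θ := fun θ => prim_hasDerivAt' hcpcont _ θ
    have hFpc : Continuous Fp := continuous_iff_continuousAt.2 fun θ => (hFp θ).continuousAt
    set Gp : ℝ → ℝ := fun θ => ∫ s in (-T)..θ, Real.exp (s/ε) * Fp s with hGpdef
    have hGpintc : Continuous (fun s => Real.exp (s/ε) * Fp s) :=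
      (Real.continuous_exp.comp (continuous_id.div_const ε)).mul hFpc
    set U : ℝ → ℝ := fun θ => Fp θ - F θ with hUdef
    have hU : ∀ θ, HasDerivAt U (cp θ - c1 θ) θ := fun θ => (hFp θ).sub (hF θ)
    have hUc : Continuous U := hFpc.sub hFc
    set I : ℝ → ℝ := fun θ => ∫ s in (-T)..θ, Real.exp (s/ε) * U s with hIdef
    have hIintc : Continuous (fun s => Real.exp (s/ε) * U s) :=
      (Real.continuous_exp.comp (continuous_id.div_const ε)).mul hUc
    have hI : ∀ θ, HasDerivAt I (Real.exp (θ/ε) * U θ) θ := fun θ => prim_hasDerivAt' hIintc _ θ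
    have hIc : Continuous I := continuous_iff_continuousAt.2 fun θ => (hI θ).continuousAt
    have hIeq : ∀ t : ℝ, I t = Gp t - G t := by
      intro t
      calc I t = ∫ s in (-T)..t, (Real.exp (s/ε) * Fp s - Real.exp (s/ε) * F s) :=
            intervalIntegral.integral_congr (fun s _ => by show Real.exp (s/ε) * U s = _; rw [hUdef]; ring)
        _ = Gp t - G t :=
            intervalIntegral.integral_sub (hGpintc.intervalIntegrable _ _) (hGintc.intervalIntegrable _ _)
    -- key pointwise identity
    have hkey : ∀ θ ∈ Set.Icc (-T) (0:ℝ),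
        ψ1 θ - φ1 θ = -(η * (1/ε) * (Real.exp (-θ/ε) * I θ)) := by
      intro θ hθ
      have h1 := (heq θ hθ).1
      rw [hL1 θ, key_repr' hcpeq (fun s => rfl) (fun s => rfl) hθ (ε := ε),
        key_repr' hc1eq (fun s => rfl) (fun s => rfl) hθ (ε := ε)] at h1
      rw [hIeq θ]
      linear_combination h1
    -- Gronwall
    set K : ℝ := 1 + η * (1/ε) * Real.exp (T/ε) with hKdef
    have hK1 : (1:ℝ) ≤ K := by
      have : 0 < η * (1/ε) * Real.exp (T/ε) := by positivity
      rw [hKdef]; linarith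
    set f : ℝ → ℝ × ℝ := fun t => (U t, I t) with hfdef
    have hf' : ∀ t, HasDerivAt f (cp t - c1 t, Real.exp (t/ε) * U t) t :=
      fun t => (hU t).prodMk (hI t)
    have hfc : Continuous f := hUc.prodMk hIc
    have hbound : ∀ x ∈ Set.Ico (-T) (0:ℝ),
        ‖(cp x - c1 x, Real.exp (x/ε) * U x)‖ ≤ K * ‖f x‖ + 0 := by
      intro x hx
      have hxP : x ∈ Set.Icc (-T) (0:ℝ) := ⟨hx.1, le_of_lt hx.2⟩
      have hUn : |U x| ≤ ‖f x‖ := by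
        rw [Prod.norm_def]
        exact le_max_left _ _
      have hIn : |I x| ≤ ‖f x‖ := by
        rw [Prod.norm_def]
        exact le_max_right _ _
      have hfn : 0 ≤ ‖f x‖ := norm_nonneg _
      rw [add_zero, Prod.norm_def]
      apply max_le
      · show ‖cp x - c1 x‖ ≤ _
        rw [hcpeq x hxP, hc1eq x hxP, Real.norm_eq_abs, hkey x hxP, abs_neg, abs_mul, abs_mul,
          abs_mul]
        have he1 : |Real.exp (-x/ε)| ≤ Real.exp (T/ε) := by
          rw [abs_of_pos (Real.exp_pos _)]
          apply Real.exp_le_exp.2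
          gcongr
          linarith [hx.1]
        have hηε : 0 ≤ |η| * |1/ε| := by positivity
        calc |η| * |1/ε| * (|Real.exp (-x/ε)| * |I x|)
            ≤ |η| * |1/ε| * (Real.exp (T/ε) * ‖f x‖) := by
              apply mul_le_mul_of_nonneg_left _ hηε
              exact mul_le_mul he1 hIn (abs_nonneg _) (le_of_lt (Real.exp_pos _))
          _ = (η * (1/ε) * Real.exp (T/ε)) * ‖f x‖ := by
              rw [abs_of_pos hη, abs_of_pos (by positivity : (0:ℝ) < 1/ε)]; ring
          _ ≤ K * ‖f x‖ := by
              apply mul_le_mul_of_nonneg_right _ hfn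
              rw [hKdef]; linarith
      · show ‖Real.exp (x/ε) * U x‖ ≤ _
        rw [Real.norm_eq_abs, abs_mul, abs_of_pos (Real.exp_pos _)]
        have he2 : Real.exp (x/ε) ≤ 1 := by
          rw [← Real.exp_zero]
          apply Real.exp_le_exp.2
          exact div_nonpos_of_nonpos_of_nonneg (le_of_lt hx.2) (le_of_lt hε)
        calc Real.exp (x/ε) * |U x| ≤ 1 * |U x| :=
              mul_le_mul_of_nonneg_right he2 (abs_nonneg _)
          _ = |U x| := one_mul _
          _ ≤ 1 * ‖f x‖ := by rw [one_mul]; exact hUn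
          _ ≤ K * ‖f x‖ := mul_le_mul_of_nonneg_right hK1 hfn
    have hinit : ‖f (-T)‖ ≤ 0 := by
      have hU0 : U (-T) = 0 := by
        show Fp (-T) - F (-T) = 0
        rw [hFpdef, hFdef]
        simp [intervalIntegral.integral_same]
      have hI0 : I (-T) = 0 := by
        rw [hIdef]
        simp [intervalIntegral.integral_same]
      rw [hfdef]
      simp [Prod.norm_def, hU0, hI0]
    have hgron := norm_le_gronwallBound_of_norm_deriv_right_le hfc.continuousOn
      (fun x _ => (hf' x).hasDerivWithinAt) hinit hbound
    have hzero : ∀ t ∈ Set.Icc (-T) (0:ℝ), I t = 0 := by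
      intro t ht
      have := hgron t ht
      rw [gronwallBound_ε0_δ0] at this
      have h1 : ‖f t‖ = 0 := le_antisymm this (norm_nonneg _)
      have h2 : |I t| ≤ 0 := by
        rw [← h1, Prod.norm_def]
        exact le_max_right _ _
      exact abs_nonpos_iff.1 h2
    have hps1 : ∀ t ∈ Set.Icc (-T) (0:ℝ), ψ1 t = φ1 t := by
      intro t ht
      have := hkey t ht
      rw [hzero t ht] at this
      simp at this
      linarith
    intro θ hθ
    refine ⟨hps1 θ hθ, ?_⟩
    have h2 := (heq θ hθ).2
    rw [hL2 θ] at h2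
    have hint : (∫ s in (-T)..θ, ψ1 s) = ∫ s in (-T)..θ, φ1 s := by
      apply intervalIntegral.integral_congr
      intro s hs
      rw [Set.uIcc_of_le hθ.1] at hs
      exact hps1 s ⟨hs.1, le_trans hs.2 hθ.2⟩
    rw [hint] at h2
    linarith
end

section
/- Derivative bound for L: with L as above, ‖(Lφ)′ − φ′‖_∞ ≤ 8η‖φ‖ for all φ ∈ C¹([−T,0], ℝ²). Hence the operator L − id is bounded in C¹-norm by a constant multiple of η. -/
open MeasureTheory

lemma ftc_icc {a b : ℝ} (f : ℝ → ℝ) (hf : ContinuousOn f (Set.Icc a b)) :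
    ∀ θ ∈ Set.Icc a b, HasDerivWithinAt (fun u => ∫ x in a..u, f x) (f θ) (Set.Icc a b) θ := by
  intro θ hθ
  haveI : Fact (θ ∈ Set.Icc a b) := ⟨hθ⟩
  refine intervalIntegral.integral_hasDerivWithinAt_right ?_ ?_ (hf θ hθ)
  · exact (hf.mono (by rw [Set.uIcc_of_le hθ.1]; exact Set.Icc_subset_Icc le_rfl hθ.2)).intervalIntegrable
  · exact hf.stronglyMeasurableAtFilter_nhdsWithin measurableSet_Icc θ

theorem stmt_6 (ε η T : ℝ) (hε : 0 < ε) (hη : 0 < η) (hT : 1 ≤ T) (hT2 : T < 2)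
    (φ1 φ2 : ℝ → ℝ) (d1 d2 : ℝ → ℝ)
    (hφ1 : ∀ θ ∈ Set.Icc (-T) (0:ℝ), HasDerivWithinAt φ1 (d1 θ) (Set.Icc (-T) 0) θ)
    (hφ2 : ∀ θ ∈ Set.Icc (-T) (0:ℝ), HasDerivWithinAt φ2 (d2 θ) (Set.Icc (-T) 0) θ)
    (N : ℝ)
    (hN : N = sSup ((fun θ => ‖(φ1 θ, φ2 θ)‖) '' Set.Icc (-T) 0))
    (L1 L2 : ℝ → ℝ)
    (hL1 : ∀ θ, L1 θ = φ1 θ +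
      η * ((1 / ε) * ∫ s in (-T)..θ, Real.exp (-(θ - s) / ε) * ∫ σ in (-T)..s, φ1 σ))
    (hL2 : ∀ θ, L2 θ = φ2 θ - η * ∫ s in (-T)..θ, φ1 s)
    (g1 g2 : ℝ → ℝ)
    (hg1 : ∀ θ ∈ Set.Icc (-T) (0:ℝ), HasDerivWithinAt L1 (g1 θ) (Set.Icc (-T) 0) θ)
    (hg2 : ∀ θ ∈ Set.Icc (-T) (0:ℝ), HasDerivWithinAt L2 (g2 θ) (Set.Icc (-T) 0) θ) :
    ∀ θ ∈ Set.Icc (-T) (0:ℝ), ‖(g1 θ - d1 θ, g2 θ - d2 θ)‖ ≤ 8 * η * N := by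
  have hε' : ε ≠ 0 := ne_of_gt hε
  have hT0 : (-T : ℝ) < 0 := by linarith
  set I : Set ℝ := Set.Icc (-T) 0 with hI
  -- continuity of φ1, φ2
  have contφ1 : ContinuousOn φ1 I := fun x hx => (hφ1 x hx).continuousWithinAt
  have contφ2 : ContinuousOn φ2 I := fun x hx => (hφ2 x hx).continuousWithinAt
  -- bound on φ1
  have hbdd : BddAbove ((fun θ => ‖(φ1 θ, φ2 θ)‖) '' I) :=
    (isCompact_Icc.image_of_continuousOn ((contφ1.prodMk contφ2).norm)).bddAbove
  have hφ1N : ∀ x ∈ I, |φ1 x| ≤ N := by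
    intro x hx
    have h1 : ‖(φ1 x, φ2 x)‖ ≤ N := hN ▸ le_csSup hbdd ⟨x, hx, rfl⟩
    exact le_trans (norm_fst_le (φ1 x, φ2 x)) h1
  have hN0 : 0 ≤ N := le_trans (abs_nonneg _) (hφ1N 0 ⟨le_of_lt hT0, le_rfl⟩)
  -- uniqueness of derivatives
  have hud : UniqueDiffOn ℝ I := uniqueDiffOn_Icc hT0
  -- F, C, B
  set F : ℝ → ℝ := fun u => ∫ s in (-T)..u, φ1 s with hFdef
  set E : ℝ → ℝ := fun s => Real.exp (s / ε) with hEdef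
  have contE : Continuous E := Real.continuous_exp.comp (continuous_id.div_const ε)
  set C : ℝ → ℝ := fun u => ∫ s in (-T)..u, E s * φ1 s with hCdef
  have hF : ∀ x ∈ I, HasDerivWithinAt F (φ1 x) I x := ftc_icc φ1 contφ1
  have contF : ContinuousOn F I := fun x hx => (hF x hx).continuousWithinAt
  have contEφ : ContinuousOn (fun s => E s * φ1 s) I := contE.continuousOn.mul contφ1
  have contEF : ContinuousOn (fun s => E s * F s) I := contE.continuousOn.mul contF
  have hC : ∀ x ∈ I, HasDerivWithinAt C (E x * φ1 x) I x := ftc_icc _ contEφ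
  set B : ℝ → ℝ := fun u => ∫ s in (-T)..u, E s * F s with hBdef
  have hB : ∀ x ∈ I, HasDerivWithinAt B (E x * F x) I x := ftc_icc _ contEF
  have contC : ContinuousOn C I := fun x hx => (hC x hx).continuousWithinAt
  have contB : ContinuousOn B I := fun x hx => (hB x hx).continuousWithinAt
  -- exp derivative
  have hEderiv : ∀ x : ℝ, HasDerivAt E (Real.exp (x / ε) * (1 / ε)) x := by
    intro x
    simpa using (HasDerivAt.exp ((hasDerivAt_id x).div_const ε))
  -- key identity B = ε E F - ε C on I
  have key : ∀ y ∈ I, B y = ε * (E y * F y) - ε * C y := by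
    have h := eq_of_has_deriv_right_eq (f := B) (g := fun y => ε * (E y * F y) - ε * C y)
      (f' := fun x => E x * F x) (a := -T) (b := 0)
      (fun x hx => (hB x (Set.mem_Icc_of_Ico hx)).mono_of_mem_nhdsWithin
        (Icc_mem_nhdsGE_of_mem hx))
      (fun x hx => by
        have hF' : HasDerivWithinAt F (φ1 x) (Set.Ici x) x :=
          (hF x (Set.mem_Icc_of_Ico hx)).mono_of_mem_nhdsWithin (Icc_mem_nhdsGE_of_mem hx)
        have hC' : HasDerivWithinAt C (E x * φ1 x) (Set.Ici x) x :=
          (hC x (Set.mem_Icc_of_Ico hx)).mono_of_mem_nhdsWithin (Icc_mem_nhdsGE_of_mem hx)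
        have h := ((((hEderiv x).hasDerivWithinAt.mul hF').const_mul ε).sub
          (hC'.const_mul ε))
        have heq : ε * (Real.exp (x / ε) * (1 / ε) * F x + E x * φ1 x) - ε * (E x * φ1 x)
            = E x * F x := by
          rw [hEdef]; field_simp; ring
        rwa [heq] at h)
      contB ((continuousOn_const.mul (contE.continuousOn.mul contF)).sub
        (continuousOn_const.mul contC))
      (by simp [hBdef, hCdef, hFdef, intervalIntegral.integral_same])
    exact h
  -- rewrite L1
  have hL1' : L1 = fun u => φ1 u + η * ((1 / ε) * (Real.exp (-u / ε) * B u)) := by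
    funext u
    have hint : (∫ s in (-T)..u, Real.exp (-(u - s) / ε) * ∫ σ in (-T)..s, φ1 σ)
        = Real.exp (-u / ε) * B u := by
      rw [hBdef]
      simp only
      rw [← intervalIntegral.integral_const_mul]
      refine intervalIntegral.integral_congr fun s _ => ?_
      rw [hEdef, hFdef]
      simp only
      rw [← mul_assoc, ← Real.exp_add]
      congr 2
      field_simp
      ring
    rw [hL1 u, hint]
  -- the main pointwise computations
  intro θ hθ
  have hu : UniqueDiffWithinAt ℝ I θ := hud θ hθ
  -- second component
  have e2 : g2 θ = d2 θ - η * φ1 θ := by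
    have hL2' : L2 = fun x => φ2 x - η * F x := funext fun x => hL2 x
    have h : HasDerivWithinAt L2 (d2 θ - η * φ1 θ) I θ := by
      rw [hL2']; exact (hφ2 θ hθ).sub ((hF θ hθ).const_mul η)
    exact ((hg2 θ hθ).derivWithin hu).symm.trans (h.derivWithin hu)
  -- first component
  have hexp : HasDerivAt (fun u : ℝ => Real.exp (-u / ε)) (Real.exp (-θ / ε) * (-1 / ε)) θ := by
    have := HasDerivAt.exp (((hasDerivAt_id θ).neg).div_const ε)
    simpa [neg_div] using this
  have e1 : g1 θ = d1 θ + η * ((1 / ε) *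
      (Real.exp (-θ / ε) * (-1 / ε) * B θ + Real.exp (-θ / ε) * (E θ * F θ))) := by
    have h : HasDerivWithinAt L1 (d1 θ + η * ((1 / ε) *
        (Real.exp (-θ / ε) * (-1 / ε) * B θ + Real.exp (-θ / ε) * (E θ * F θ)))) I θ := by
      rw [hL1']
      exact (hφ1 θ hθ).add (((hexp.hasDerivWithinAt.mul (hB θ hθ)).const_mul (1 / ε)).const_mul η)
    exact ((hg1 θ hθ).derivWithin hu).symm.trans (h.derivWithin hu)
  have e1' : g1 θ - d1 θ = η * ((1 / ε) * (Real.exp (-θ / ε) * C θ)) := by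
    rw [e1, key θ hθ]
    field_simp
    ring
  -- bound on C θ
  have hintexp : (∫ s in (-T)..θ, Real.exp (s / ε))
      = ε * Real.exp (θ / ε) - ε * Real.exp (-T / ε) := by
    refine intervalIntegral.integral_eq_sub_of_hasDerivAt (f := fun u => ε * Real.exp (u / ε))
      (fun x _ => ?_) ?_
    · have h := (hEderiv x).const_mul ε
      have heq : ε * (Real.exp (x / ε) * (1 / ε)) = Real.exp (x / ε) := by field_simp
      rw [heq] at h
      exact h
    · exact (contE.continuousOn.mono (by intro x hx; exact hx)).intervalIntegrable
  have hCbound : |C θ| ≤ N * (ε * Real.exp (θ / ε)) := by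
    have hsub : Set.uIcc (-T) θ ⊆ I := by
      rw [Set.uIcc_of_le hθ.1]; exact Set.Icc_subset_Icc le_rfl hθ.2
    have hi1 : IntervalIntegrable (fun s => |E s * φ1 s|) volume (-T) θ :=
      ((contEφ.mono hsub).abs).intervalIntegrable
    have hi2 : IntervalIntegrable (fun s => N * E s) volume (-T) θ :=
      ((contE.continuousOn.const_smul N).mono hsub |>.congr fun x _ => by
        simp [smul_eq_mul]).intervalIntegrable
    have h1 : |C θ| ≤ ∫ s in (-T)..θ, |E s * φ1 s| := by
      rw [hCdef]
      exact intervalIntegral.abs_integral_le_integral_abs hθ.1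
    have h2 : (∫ s in (-T)..θ, |E s * φ1 s|) ≤ ∫ s in (-T)..θ, N * E s := by
      refine intervalIntegral.integral_mono_on hθ.1 hi1 hi2 fun x hx => ?_
      have hxI : x ∈ I := ⟨hx.1, le_trans hx.2 hθ.2⟩
      rw [abs_mul, abs_of_pos (by rw [hEdef]; exact Real.exp_pos _), mul_comm N (E x)]
      exact mul_le_mul_of_nonneg_left (hφ1N x hxI) (Real.exp_pos (x / ε)).le
    have h3 : (∫ s in (-T)..θ, N * E s) = N * (ε * Real.exp (θ / ε) - ε * Real.exp (-T / ε)) := by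
      rw [hEdef, intervalIntegral.integral_const_mul, hintexp]
    have h4 : N * (ε * Real.exp (θ / ε) - ε * Real.exp (-T / ε)) ≤ N * (ε * Real.exp (θ / ε)) := by
      nlinarith [mul_nonneg (mul_nonneg hN0 hε.le) (Real.exp_pos (-T / ε)).le]
    linarith
  have habs1 : |g1 θ - d1 θ| ≤ η * N := by
    rw [e1', abs_mul, abs_mul, abs_mul]
    have hep : (0:ℝ) < Real.exp (-θ / ε) := Real.exp_pos _
    have : |η| * (|1 / ε| * (|Real.exp (-θ / ε)| * |C θ|))
        ≤ η * ((1 / ε) * (Real.exp (-θ / ε) * (N * (ε * Real.exp (θ / ε))))) := by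
      rw [abs_of_pos hη, abs_of_pos (by positivity : (0:ℝ) < 1/ε), abs_of_pos hep]
      have := mul_le_mul_of_nonneg_left hCbound (le_of_lt hep)
      have := mul_le_mul_of_nonneg_left this (le_of_lt (by positivity : (0:ℝ) < 1/ε))
      exact mul_le_mul_of_nonneg_left this (le_of_lt hη)
    refine le_trans this (le_of_eq ?_)
    have hmul : Real.exp (-θ / ε) * Real.exp (θ / ε) = 1 := by
      rw [← Real.exp_add]
      rw [show -θ / ε + θ / ε = 0 by ring, Real.exp_zero]
    rw [show η * ((1 / ε) * (Real.exp (-θ / ε) * (N * (ε * Real.exp (θ / ε))))) = η * N * (ε / ε) * (Real.exp (-θ / ε) * Real.exp (θ / ε)) by ring, hmul, div_self hε']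
    ring
  have habs2 : |g2 θ - d2 θ| ≤ η * N := by
    rw [e2]
    have : d2 θ - η * φ1 θ - d2 θ = -(η * φ1 θ) := by ring
    rw [this, abs_neg, abs_mul, abs_of_pos hη]
    exact mul_le_mul_of_nonneg_left (hφ1N θ hθ) (le_of_lt hη)
  have hnorm : ‖(g1 θ - d1 θ, g2 θ - d2 θ)‖ = max |g1 θ - d1 θ| |g2 θ - d2 θ| := by
    simp [Prod.norm_def, Real.norm_eq_abs]
  rw [hnorm]
  have : η * N ≤ 8 * η * N := by nlinarith
  exact le_trans (max_le habs1 habs2) this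
end
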